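/- For every natural number n, the number of symmetric fighting fish of size 2n+1 equals C(3n+1,n)/(n+1), i.e., equals the number of ordered pairs of ternary trees with n total nodes; as a pure identity: C(3n+1,n)/(n+1) = C(3n,n)/(2n+1) + C(3n,n+1)/(2n+1) for all n ≥ 1. -/
import Mathlib


theorem symmetric_fighting_fish_identity (n : ℕ) (hn : 1 ≤ n) :
    Nat.choose (3 * n + 1) n / (n + 1) =
      Nat.choose (3 * n) n / (2 * n + 1) + Nat.choose (3 * n) (n + 1) / (2 * n + 1) := by
  -- key identities
  have h1 : Nat.choose (3 * n + 1) (n + 1) * (n + 1) = Nat.choose (3 * n + 1) n * (2 * n + 1) := by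
    have := Nat.choose_succ_right_eq (3 * n + 1) n
    have h3 : 3 * n + 1 - n = 2 * n + 1 := by omega
    rw [h3] at this
    exact this
  have h2 : (3 * n + 1) * Nat.choose (3 * n) n = Nat.choose (3 * n + 1) (n + 1) * (n + 1) := by
    simpa using Nat.add_one_mul_choose_eq (3 * n) n
  have hS : Nat.choose (3 * n + 1) (n + 1) =
      Nat.choose (3 * n) n + Nat.choose (3 * n) (n + 1) := by
    rw [Nat.choose_succ_succ']
  have cop1 : Nat.Coprime (n + 1) (2 * n + 1) := by
    have e : 2 * n + 1 = n + (n + 1) := by ring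
    rw [e, Nat.coprime_add_self_right]
    have e2 : n + 1 = 1 + n * 1 := by ring
    rw [e2, Nat.coprime_add_mul_left_left]
    exact Nat.coprime_one_left n
  have cop2 : Nat.Coprime (2 * n + 1) (3 * n + 1) := by
    have e : 3 * n + 1 = n + (2 * n + 1) := by ring
    rw [e, Nat.coprime_add_self_right]
    have e2 : 2 * n + 1 = 1 + n * 2 := by ring
    rw [e2, Nat.coprime_add_mul_left_left]
    exact Nat.coprime_one_left n
  -- divisibilities
  have d1 : (2 * n + 1) ∣ Nat.choose (3 * n + 1) (n + 1) := by
    have : (2 * n + 1) ∣ Nat.choose (3 * n + 1) (n + 1) * (n + 1) := ⟨Nat.choose (3 * n + 1) n, by linarith [h1]⟩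
    exact (Nat.Coprime.dvd_of_dvd_mul_right cop1.symm this)
  have dA : (2 * n + 1) ∣ Nat.choose (3 * n) n := by
    have : (2 * n + 1) ∣ (3 * n + 1) * Nat.choose (3 * n) n := by
      rw [h2]; exact Dvd.dvd.mul_right d1 _
    exact Nat.Coprime.dvd_of_dvd_mul_left cop2 this
  have dB : (2 * n + 1) ∣ Nat.choose (3 * n) (n + 1) := by
    have := (Nat.dvd_sub d1 dA)
    rwa [hS, Nat.add_sub_cancel_left] at this
  obtain ⟨a, ha⟩ := dA
  obtain ⟨b, hb⟩ := dB
  have hSab : Nat.choose (3 * n + 1) (n + 1) = (2 * n + 1) * (a + b) := by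
    rw [hS, ha, hb]; ring
  have hL : Nat.choose (3 * n + 1) n = (a + b) * (n + 1) := by
    have h1' : Nat.choose (3 * n + 1) n * (2 * n + 1) = ((a + b) * (n + 1)) * (2 * n + 1) := by
      rw [← h1, hSab]; ring
    exact Nat.eq_of_mul_eq_mul_right (by omega) h1'
  rw [hL, ha, hb, Nat.mul_div_cancel _ (by omega : 0 < n + 1),
    Nat.mul_div_cancel_left _ (by omega : 0 < 2 * n + 1),
    Nat.mul_div_cancel_left _ (by omega : 0 < 2 * n + 1)]
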